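/- For all real numbers x and y, |x⁻ - y⁻|^p ≤ |x - y|^(p-2) (x - y) (y⁻ - x⁻), where x⁻ = max(-x, 0) denotes the negative part and p > 1. -/

import Mathlib

theorem stmt_0 (p : ℝ) (hp : 1 < p) (x y : ℝ) :
    |max (-x) 0 - max (-y) 0| ^ p ≤
      |x - y| ^ (p - 2) * (x - y) * (max (-y) 0 - max (-x) 0) := by
  set a := max (-x) 0 with ha
  set b := max (-y) 0 with hb
  have h1 : |a - b| ≤ |x - y| := by
    have := abs_max_sub_max_le_abs (-x) (-y) 0
    calc |a - b| ≤ |(-x) - (-y)| := this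
      _ = |x - y| := by rw [← abs_neg]; ring_nf
  have h2 : (x - y) * (b - a) = |x - y| * |a - b| := by
    rcases le_total x y with h | h
    · have hab : b ≤ a := by
        apply max_le_max _ le_rfl
        linarith
      rw [abs_of_nonpos (by linarith), abs_of_nonneg (by linarith)]
      ring
    · have hab : a ≤ b := by
        apply max_le_max _ le_rfl
        linarith
      rw [abs_of_nonneg (by linarith), abs_of_nonpos (by linarith)]
      ring
  by_cases hxy : x = y
  · subst hxy
    simp only [sub_self]
    rw [show a - b = 0 by rw [ha, hb, sub_self], abs_zero, Real.zero_rpow (ne_of_gt (by linarith : (0:ℝ) < p))]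
    simp
  · have hpos : (0:ℝ) < |x - y| := abs_pos.mpr (sub_ne_zero.mpr hxy)
    have hR : |x - y| ^ (p - 2) * (x - y) * (b - a)
        = |x - y| ^ (p - 1) * |a - b| := by
      rw [mul_assoc, h2, ← mul_assoc, show p - 1 = p - 2 + 1 by ring,
        Real.rpow_add_one hpos.ne']
    rw [hR]
    by_cases hab : a = b
    · rw [hab, sub_self, abs_zero, Real.zero_rpow (by positivity), mul_zero]
    · have habpos : (0:ℝ) < |a - b| := abs_pos.mpr (sub_ne_zero.mpr hab)
      have : |a - b| ^ p = |a - b| ^ (p - 1) * |a - b| := by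
        rw [show p = p - 1 + 1 by ring, Real.rpow_add_one habpos.ne']
        ring_nf
      rw [this]
      apply mul_le_mul _ le_rfl habpos.le (by positivity)
      exact Real.rpow_le_rpow habpos.le h1 (by linarith)
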